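/- arXiv:2505.14587 — 3 statements merged into one kernel-verified Lean document; each statement's English description precedes it below -/
import Mathlib

section
/- Let λ > 0 and for c₀ ∈ (0,1) define δ(c₀) = (√((1+λ−c₀)² + 4λc₀) − (1+λ−c₀)) / (2λ). Then δ is strictly increasing on (0,1): for all 0 < c₀ < c₀' < 1, δ(c₀) < δ(c₀'). -/
/-- For fixed `λ > 0`, the correction term
`δ(c₀) = (√((1+λ−c₀)² + 4λc₀) − (1+λ−c₀))/(2λ)` is strictly increasing in `c₀` on `(0,1)`. -/
theorem delta_strictMono_in_c0
    (lam : ℝ) (hlam : 0 < lam)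
    (δ : ℝ → ℝ)
    (hδ : ∀ c₀, δ c₀ =
      (Real.sqrt ((1 + lam - c₀) ^ 2 + 4 * lam * c₀) - (1 + lam - c₀)) / (2 * lam)) :
    StrictMonoOn δ (Set.Ioo (0 : ℝ) 1) := by
  intro c hc c' hc' hcc
  rw [hδ, hδ]
  have h2l : (0:ℝ) < 2 * lam := by linarith
  rw [div_lt_div_iff_of_pos_right h2l]
  set a := Real.sqrt ((1 + lam - c) ^ 2 + 4 * lam * c) with ha
  set b := Real.sqrt ((1 + lam - c') ^ 2 + 4 * lam * c') with hb
  have hA : (1 + lam - c) ^ 2 + 4 * lam * c = (c + lam - 1) ^ 2 + 4 * lam := by ring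
  have hB : (1 + lam - c') ^ 2 + 4 * lam * c' = (c' + lam - 1) ^ 2 + 4 * lam := by ring
  have hAnn : (0:ℝ) ≤ (1 + lam - c) ^ 2 + 4 * lam * c := by rw [hA]; positivity
  have hBnn : (0:ℝ) ≤ (1 + lam - c') ^ 2 + 4 * lam * c' := by rw [hB]; positivity
  have ha2 : a ^ 2 = (c + lam - 1) ^ 2 + 4 * lam := by
    rw [ha, Real.sq_sqrt hAnn, hA]
  have hb2 : b ^ 2 = (c' + lam - 1) ^ 2 + 4 * lam := by
    rw [hb, Real.sq_sqrt hBnn, hB]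
  have hanon : 0 ≤ a := Real.sqrt_nonneg _
  have hbnon : 0 ≤ b := Real.sqrt_nonneg _
  have hapos : 0 < a := by nlinarith
  have hbpos : 0 < b := by nlinarith
  have hs : 0 < a + c + lam - 1 := by nlinarith [sq_nonneg (a + c + lam - 1)]
  have ht : 0 < b + c' + lam - 1 := by nlinarith [sq_nonneg (b + c' + lam - 1)]
  -- goal : a - (1+lam-c) < b - (1+lam-c'), i.e. a + c < b + c'
  have key : a + c < b + c' := by
    by_contra hcon
    push_neg at hcon
    have hst : b + c' + lam - 1 ≤ a + c + lam - 1 := by linarith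
    nlinarith [mul_pos hs ht, mul_pos ht (sub_pos.mpr hcc), mul_pos hs hbpos,
      mul_nonneg (sub_nonneg.mpr hst) hs.le, mul_nonneg (sub_nonneg.mpr hst) ht.le]
  linarith
end

section
/- Let c₀ ∈ (0,1) and for λ > 0 define δ(λ) = (√((1+λ−c₀)² + 4λc₀) − (1+λ−c₀)) / (2λ). Then (i) δ is strictly decreasing on (0,∞), and (ii) the function λ ↦ λ·(1 + δ(λ)) is strictly increasing on (0,∞). -/
/-- For fixed `c₀ ∈ (0,1)`, the map `λ ↦ δ(λ)` is strictly decreasing on `(0,∞)`, and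
`λ ↦ λ·(1 + δ(λ))` is strictly increasing on `(0,∞)`, where
`δ(λ) = (√((1+λ−c₀)² + 4λc₀) − (1+λ−c₀))/(2λ)`. -/
theorem delta_strictAnti_in_lambda_and_lambda_one_add_delta_strictMono
    (c₀ : ℝ) (hc₀ : c₀ ∈ Set.Ioo (0 : ℝ) 1)
    (δ : ℝ → ℝ)
    (hδ : ∀ lam, δ lam =
      (Real.sqrt ((1 + lam - c₀) ^ 2 + 4 * lam * c₀) - (1 + lam - c₀)) / (2 * lam)) :
    StrictAntiOn δ (Set.Ioi (0 : ℝ)) ∧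
      StrictMonoOn (fun lam => lam * (1 + δ lam)) (Set.Ioi (0 : ℝ)) := by
  obtain ⟨hc0, hc1⟩ := hc₀
  -- s lam > 1 - lam - c₀ for lam > 0
  have hs_big : ∀ lam : ℝ, 0 < lam →
      1 - lam - c₀ < Real.sqrt ((1 + lam - c₀) ^ 2 + 4 * lam * c₀) := by
    intro lam hlam
    have h1 : ((1 + lam - c₀) ^ 2 + 4 * lam * c₀) = (1 - lam - c₀) ^ 2 + 4 * lam := by ring
    rw [h1]
    calc 1 - lam - c₀ ≤ |1 - lam - c₀| := le_abs_self _
      _ = Real.sqrt ((1 - lam - c₀) ^ 2) := (Real.sqrt_sq_eq_abs _).symm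
      _ < Real.sqrt ((1 - lam - c₀) ^ 2 + 4 * lam) := by
          apply Real.sqrt_lt_sqrt (sq_nonneg _); linarith
  -- expression for lam * (1 + δ lam)
  have hg : ∀ lam : ℝ, 0 < lam →
      lam * (1 + δ lam) = (Real.sqrt ((1 + lam - c₀) ^ 2 + 4 * lam * c₀) + lam + c₀ - 1) / 2 := by
    intro lam hlam
    rw [hδ]
    field_simp
    ring
  have hgpos : ∀ lam : ℝ, 0 < lam → 0 < lam * (1 + δ lam) := by
    intro lam hlam
    rw [hg lam hlam]
    have := hs_big lam hlam
    linarith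
  -- strict monotonicity of lam * (1 + δ lam)
  have hmono : StrictMonoOn (fun lam => lam * (1 + δ lam)) (Set.Ioi (0 : ℝ)) := by
    intro a ha b hb hab
    simp only [Set.mem_Ioi] at ha hb
    simp only
    rw [hg a ha, hg b hb]
    have hsab : Real.sqrt ((1 + a - c₀) ^ 2 + 4 * a * c₀)
        < Real.sqrt ((1 + b - c₀) ^ 2 + 4 * b * c₀) := by
      apply Real.sqrt_lt_sqrt (by nlinarith)
      nlinarith
    linarith
  -- fixed point identity: δ lam = c₀ / (lam*(1+δ lam) + 1 - c₀)
  have hfix : ∀ lam : ℝ, 0 < lam → δ lam = c₀ / (lam * (1 + δ lam) + 1 - c₀) := by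
    intro lam hlam
    have hsq : Real.sqrt ((1 + lam - c₀) ^ 2 + 4 * lam * c₀) ^ 2
        = (1 + lam - c₀) ^ 2 + 4 * lam * c₀ := Real.sq_sqrt (by nlinarith)
    have hden : 0 < lam * (1 + δ lam) + 1 - c₀ := by
      have := hgpos lam hlam
      linarith
    rw [eq_div_iff (ne_of_gt hden)]
    rw [hδ]
    have h2 : (2 : ℝ) * lam ≠ 0 := by positivity
    field_simp
    rw [show (1 + lam - c₀) ^ 2 + lam * c₀ * 4 = (1 + lam - c₀) ^ 2 + 4 * lam * c₀ by ring]
    nlinarith [hsq]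
  refine ⟨?_, hmono⟩
  intro a ha b hb hab
  simp only [Set.mem_Ioi] at ha hb
  rw [hfix a ha, hfix b hb]
  have hda : 0 < a * (1 + δ a) + 1 - c₀ := by have := hgpos a ha; linarith
  have hdb : 0 < b * (1 + δ b) + 1 - c₀ := by have := hgpos b hb; linarith
  have hlt : a * (1 + δ a) < b * (1 + δ b) := hmono (Set.mem_Ioi.mpr ha) (Set.mem_Ioi.mpr hb) hab
  exact div_lt_div_of_pos_left hc0 hda (by linarith)
end

section
/- Let d, n be positive integers, λ > 0, let C₁, C₂ ∈ ℝ^{d×d} be symmetric positive semidefinite matrices, and let c₁, c₂ > 0 with c₁ + c₂ = 1. Then there exists a pair (δ₁, δ₂) with 0 ≤ δ_ℓ ≤ tr(C_ℓ)/(nλ) for ℓ = 1, 2 satisfying the coupled fixed-point equations δ_ℓ = (1/n)·tr( C_ℓ · ( c₁·C₁/(1+δ₁) + c₂·C₂/(1+δ₂) + λ I_d )^{-1} ) for ℓ = 1, 2; the inverse exists because the matrix being inverted is positive definite. -/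
open Matrix

section Aux

variable {d : ℕ}

open scoped MatrixOrder in
private noncomputable def Matrix.PosSemidef.sqrt {M : Matrix (Fin d) (Fin d) ℝ}
    (_hM : M.PosSemidef) : Matrix (Fin d) (Fin d) ℝ :=
  CFC.sqrt M

open scoped MatrixOrder in
private lemma Matrix.PosSemidef.sqrt_mul_self {M : Matrix (Fin d) (Fin d) ℝ}
    (hM : M.PosSemidef) : hM.sqrt * hM.sqrt = M :=
  CFC.sqrt_mul_sqrt_self M (Matrix.nonneg_iff_posSemidef.mpr hM)

open scoped MatrixOrder in
private lemma Matrix.PosSemidef.posSemidef_sqrt {M : Matrix (Fin d) (Fin d) ℝ}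
    (hM : M.PosSemidef) : hM.sqrt.PosSemidef :=
  Matrix.nonneg_iff_posSemidef.mp (CFC.sqrt_nonneg M)

private lemma my_diag_nonneg {M : Matrix (Fin d) (Fin d) ℝ} (hM : M.PosSemidef) (i : Fin d) :
    0 ≤ M i i := by
  have := hM.dotProduct_mulVec_nonneg (Pi.single i 1)
  simpa [Matrix.mulVec_single, single_dotProduct] using this

private lemma my_trace_nonneg {M : Matrix (Fin d) (Fin d) ℝ} (hM : M.PosSemidef) :
    0 ≤ M.trace := by
  rw [Matrix.trace]
  exact Finset.sum_nonneg fun i _ => my_diag_nonneg hM i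

private lemma my_smul_psd {a : ℝ} (ha : 0 ≤ a) {M : Matrix (Fin d) (Fin d) ℝ}
    (hM : M.PosSemidef) : (a • M).PosSemidef := by
  refine Matrix.PosSemidef.of_dotProduct_mulVec_nonneg ?_ fun x => ?_
  · unfold Matrix.IsHermitian
    rw [Matrix.conjTranspose_smul, hM.1]
    simp
  · rw [Matrix.smul_mulVec, dotProduct_smul]
    exact smul_nonneg ha (hM.dotProduct_mulVec_nonneg x)

private lemma my_trace_mul_nonneg {C D : Matrix (Fin d) (Fin d) ℝ} (hC : C.PosSemidef)
    (hD : D.PosSemidef) : 0 ≤ (C * D).trace := by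
  have hS : hC.sqrt * hC.sqrt = C := hC.sqrt_mul_self
  have h1 : (hC.sqrt * D * hC.sqrt).PosSemidef := by
    have := hD.mul_mul_conjTranspose_same hC.sqrt
    rwa [hC.posSemidef_sqrt.1] at this
  have h2 : (hC.sqrt * D * hC.sqrt).trace = (C * D).trace := by
    rw [Matrix.trace_mul_comm, ← Matrix.mul_assoc, hS]
  rw [← h2]
  exact my_trace_nonneg h1

private lemma my_sqrt_det_isUnit {A : Matrix (Fin d) (Fin d) ℝ} (hA : A.PosDef) :
    IsUnit (hA.posSemidef.sqrt.det) := by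
  have h : hA.posSemidef.sqrt.det * hA.posSemidef.sqrt.det = A.det := by
    rw [← Matrix.det_mul, hA.posSemidef.sqrt_mul_self]
  have hp := hA.det_pos
  have hne : hA.posSemidef.sqrt.det ≠ 0 := by
    intro h0; rw [h0, mul_zero] at h; exact hp.ne' h.symm
  exact hne.isUnit

private lemma my_conj_posdef {B R : Matrix (Fin d) (Fin d) ℝ} (hB : B.PosDef)
    (hR : R.IsHermitian) (hRu : IsUnit R.det) : (R * B * R).PosDef := by
  refine Matrix.PosDef.of_dotProduct_mulVec_pos ?_ fun x hx => ?_
  · have := Matrix.isHermitian_conjTranspose_mul_mul R hB.1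
    rwa [hR] at this
  · have hx' : R *ᵥ x ≠ 0 := by
      intro h
      exact hx ((Matrix.mulVec_injective_iff_isUnit.mpr
        ((Matrix.isUnit_iff_isUnit_det R).mpr hRu)).eq_iff.mp (by simpa using h))
    have := hB.dotProduct_mulVec_pos hx'
    have hRR : R * B * R = Rᴴ * B * R := by rw [hR]
    rw [hRR]
    simpa only [star_mulVec, Matrix.dotProduct_mulVec, Matrix.vecMul_vecMul] using this

private lemma my_one_sub_inv_psd {M : Matrix (Fin d) (Fin d) ℝ} (hM : M.PosDef)
    (h1 : (M - 1).PosSemidef) : ((1 : Matrix (Fin d) (Fin d) ℝ) - M⁻¹).PosSemidef := by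
  have hSS : hM.posSemidef.sqrt * hM.posSemidef.sqrt = M := hM.posSemidef.sqrt_mul_self
  have hSh : hM.posSemidef.sqrtᴴ = hM.posSemidef.sqrt := hM.posSemidef.posSemidef_sqrt.1
  have key1 : (M * M - M).PosSemidef := by
    have h := h1.mul_mul_conjTranspose_same hM.posSemidef.sqrt
    rw [hSh] at h
    have heq : ∀ S : Matrix (Fin d) (Fin d) ℝ, S * S = M → S * (M - 1) * S = M * M - M := by
      intro S hS; rw [← hS]; noncomm_ring
    rwa [heq _ hSS] at h
  have hMu : IsUnit M.det := hM.det_pos.ne'.isUnit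
  have hMinv : (M⁻¹)ᴴ = M⁻¹ := hM.inv.1
  have key2 : M⁻¹ * (M * M - M) * M⁻¹ = 1 - M⁻¹ := by
    rw [Matrix.mul_sub, Matrix.sub_mul, ← Matrix.mul_assoc M⁻¹ M M,
      Matrix.nonsing_inv_mul M hMu, Matrix.one_mul, Matrix.one_mul,
      Matrix.mul_nonsing_inv M hMu]
  have h := key1.mul_mul_conjTranspose_same M⁻¹
  rw [hMinv, key2] at h
  exact h

private lemma my_inv_antitone {A B : Matrix (Fin d) (Fin d) ℝ} (hA : A.PosDef) (hB : B.PosDef)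
    (hAB : (B - A).PosSemidef) : (A⁻¹ - B⁻¹).PosSemidef := by
  set R := hA.posSemidef.sqrt with hRdef
  have hRR : R * R = A := hA.posSemidef.sqrt_mul_self
  have hRh : Rᴴ = R := hA.posSemidef.posSemidef_sqrt.1
  have hRu : IsUnit R.det := my_sqrt_det_isUnit hA
  have hRih : (R⁻¹)ᴴ = R⁻¹ := by rw [Matrix.conjTranspose_nonsing_inv, hRh]
  have hRiu : IsUnit (R⁻¹).det := R.isUnit_nonsing_inv_det hRu
  have hM : (R⁻¹ * B * R⁻¹).PosDef := my_conj_posdef hB hRih hRiu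
  have hM1 : (R⁻¹ * B * R⁻¹ - 1).PosSemidef := by
    have h := hAB.mul_mul_conjTranspose_same R⁻¹
    rw [hRih] at h
    have heq : R⁻¹ * (B - A) * R⁻¹ = R⁻¹ * B * R⁻¹ - 1 := by
      rw [Matrix.mul_sub, Matrix.sub_mul, ← hRR]
      congr 1
      rw [← Matrix.mul_assoc R⁻¹ R R, Matrix.nonsing_inv_mul R hRu, Matrix.one_mul,
        Matrix.mul_nonsing_inv R hRu]
    rwa [heq] at h
  have h := my_one_sub_inv_psd hM hM1
  have hMinv : (R⁻¹ * B * R⁻¹)⁻¹ = R * B⁻¹ * R := by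
    rw [Matrix.mul_inv_rev, Matrix.mul_inv_rev, Matrix.nonsing_inv_nonsing_inv R hRu,
      Matrix.mul_assoc]
  rw [hMinv] at h
  have h2 := h.mul_mul_conjTranspose_same R⁻¹
  rw [hRih] at h2
  have heq2 : R⁻¹ * (1 - R * B⁻¹ * R) * R⁻¹ = A⁻¹ - B⁻¹ := by
    have hAinv : A⁻¹ = R⁻¹ * R⁻¹ := by rw [← hRR, Matrix.mul_inv_rev]
    rw [Matrix.mul_sub, Matrix.sub_mul, Matrix.mul_one, hAinv]
    congr 1
    rw [← Matrix.mul_assoc, ← Matrix.mul_assoc, Matrix.nonsing_inv_mul R hRu,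
      Matrix.one_mul, Matrix.mul_assoc, Matrix.mul_nonsing_inv R hRu, Matrix.mul_one]
  rwa [heq2] at h2

private lemma my_smul_one_posdef {lam : ℝ} (hl : 0 < lam) :
    (lam • (1 : Matrix (Fin d) (Fin d) ℝ)).PosDef := by
  refine Matrix.PosDef.of_dotProduct_mulVec_pos (by simp [Matrix.IsHermitian]) fun x hx => ?_
  have h1 : (lam • (1 : Matrix (Fin d) (Fin d) ℝ)) *ᵥ x = lam • x := by
    rw [Matrix.smul_mulVec, Matrix.one_mulVec]
  rw [h1, dotProduct_smul]
  have : (0:ℝ) < star x ⬝ᵥ x := Matrix.dotProduct_star_self_pos_iff.mpr hx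
  exact smul_pos hl (by simpa using this)

private lemma my_smul_one_inv {lam : ℝ} (hl : 0 < lam) :
    (lam • (1 : Matrix (Fin d) (Fin d) ℝ))⁻¹ = lam⁻¹ • (1 : Matrix (Fin d) (Fin d) ℝ) := by
  apply Matrix.inv_eq_right_inv
  rw [Matrix.smul_mul, Matrix.mul_smul, smul_smul, Matrix.one_mul,
    mul_inv_cancel₀ hl.ne', one_smul]

/-- If `A ≥ lam • 1` then `tr (C A⁻¹) ≤ tr C / lam`. -/
private lemma my_trace_inv_bound {lam : ℝ} (hl : 0 < lam) {C A : Matrix (Fin d) (Fin d) ℝ}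
    (hC : C.PosSemidef) (hA : A.PosDef)
    (hge : (A - lam • (1 : Matrix (Fin d) (Fin d) ℝ)).PosSemidef) :
    (C * A⁻¹).trace ≤ C.trace / lam := by
  have h := my_inv_antitone (my_smul_one_posdef hl) hA hge
  rw [my_smul_one_inv hl] at h
  have h2 := my_trace_mul_nonneg hC h
  have hexp : C * (lam⁻¹ • (1 : Matrix (Fin d) (Fin d) ℝ) - A⁻¹)
      = lam⁻¹ • C - C * A⁻¹ := by
    rw [Matrix.mul_sub, Matrix.mul_smul, Matrix.mul_one]
  rw [hexp, Matrix.trace_sub, Matrix.trace_smul] at h2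
  rw [div_eq_inv_mul]
  simpa using sub_nonneg.mp h2

end Aux

/-- Existence of the coupled deterministic-equivalent correction terms: there exist
`0 ≤ δ_ℓ ≤ tr(C_ℓ)/(nλ)` with
`δ_ℓ = (1/n)·tr(C_ℓ·(c₁C₁/(1+δ₁) + c₂C₂/(1+δ₂) + λI)⁻¹)`, the inverted matrix being
positive definite. -/
theorem coupled_fixed_point_exists
    (d n : ℕ) (hd : 0 < d) (hn : 0 < n)
    (lam : ℝ) (hlam : 0 < lam)
    (C₁ C₂ : Matrix (Fin d) (Fin d) ℝ)
    (hC₁ : C₁.PosSemidef) (hC₂ : C₂.PosSemidef)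
    (c₁ c₂ : ℝ) (hc₁ : 0 < c₁) (hc₂ : 0 < c₂) (hc : c₁ + c₂ = 1) :
    ∃ δ₁ δ₂ : ℝ,
      (0 ≤ δ₁ ∧ δ₁ ≤ C₁.trace / (n * lam)) ∧
      (0 ≤ δ₂ ∧ δ₂ ≤ C₂.trace / (n * lam)) ∧
      ((c₁ / (1 + δ₁)) • C₁ + (c₂ / (1 + δ₂)) • C₂
        + lam • (1 : Matrix (Fin d) (Fin d) ℝ)).PosDef ∧
      δ₁ = (1 / (n : ℝ)) * (C₁ * ((c₁ / (1 + δ₁)) • C₁ + (c₂ / (1 + δ₂)) • C₂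
        + lam • (1 : Matrix (Fin d) (Fin d) ℝ))⁻¹).trace ∧
      δ₂ = (1 / (n : ℝ)) * (C₂ * ((c₁ / (1 + δ₁)) • C₁ + (c₂ / (1 + δ₂)) • C₂
        + lam • (1 : Matrix (Fin d) (Fin d) ℝ))⁻¹).trace := by
  classical
  have hnl : (0:ℝ) < n * lam := by positivity
  have hM₁0 : (0:ℝ) ≤ C₁.trace / (n * lam) := div_nonneg (my_trace_nonneg hC₁) hnl.le
  have hM₂0 : (0:ℝ) ≤ C₂.trace / (n * lam) := div_nonneg (my_trace_nonneg hC₂) hnl.le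
  haveI : Fact ((0:ℝ) ≤ C₁.trace / (n * lam)) := ⟨hM₁0⟩
  haveI : Fact ((0:ℝ) ≤ C₂.trace / (n * lam)) := ⟨hM₂0⟩
  -- the matrix-valued map
  set Amat : ℝ → ℝ → Matrix (Fin d) (Fin d) ℝ := fun a b =>
    (c₁ / (1 + a)) • C₁ + (c₂ / (1 + b)) • C₂ + lam • (1 : Matrix (Fin d) (Fin d) ℝ)
    with hAmat
  have hPSDpart : ∀ a b : ℝ, 0 ≤ a → 0 ≤ b →
      ((c₁ / (1 + a)) • C₁ + (c₂ / (1 + b)) • C₂).PosSemidef := fun a b ha hb =>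
    (my_smul_psd (div_nonneg hc₁.le (by linarith)) hC₁).add
      (my_smul_psd (div_nonneg hc₂.le (by linarith)) hC₂)
  have hPD : ∀ a b : ℝ, 0 ≤ a → 0 ≤ b → (Amat a b).PosDef := fun a b ha hb =>
    Matrix.PosDef.posSemidef_add (hPSDpart a b ha hb) (my_smul_one_posdef hlam)
  have hge : ∀ a b : ℝ, 0 ≤ a → 0 ≤ b →
      (Amat a b - lam • (1 : Matrix (Fin d) (Fin d) ℝ)).PosSemidef := by
    intro a b ha hb
    have : Amat a b - lam • (1 : Matrix (Fin d) (Fin d) ℝ)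
        = (c₁ / (1 + a)) • C₁ + (c₂ / (1 + b)) • C₂ := by
      rw [hAmat]; exact add_sub_cancel_right _ _
    rw [this]; exact hPSDpart a b ha hb
  have hanti : ∀ a b a' b' : ℝ, 0 ≤ a → 0 ≤ b → a ≤ a' → b ≤ b' →
      (Amat a b - Amat a' b').PosSemidef := by
    intro a b a' b' ha hb haa hbb
    have heq : Amat a b - Amat a' b'
        = (c₁ / (1 + a) - c₁ / (1 + a')) • C₁ + (c₂ / (1 + b) - c₂ / (1 + b')) • C₂ := by
      rw [hAmat]; simp only [sub_smul]; abel
    rw [heq]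
    refine (my_smul_psd ?_ hC₁).add (my_smul_psd ?_ hC₂)
    · exact sub_nonneg.mpr (div_le_div_of_nonneg_left hc₁.le (by linarith) (by linarith))
    · exact sub_nonneg.mpr (div_le_div_of_nonneg_left hc₂.le (by linarith) (by linarith))
  -- the fixed point map on the box
  set T := ↥(Set.Icc (0:ℝ) (C₁.trace / (n * lam))) × ↥(Set.Icc (0:ℝ) (C₂.trace / (n * lam)))
    with hTdef
  have hbound : ∀ (C : Matrix (Fin d) (Fin d) ℝ), C.PosSemidef → ∀ a b : ℝ, 0 ≤ a → 0 ≤ b →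
      (0:ℝ) ≤ (1 / (n:ℝ)) * (C * (Amat a b)⁻¹).trace ∧
      (1 / (n:ℝ)) * (C * (Amat a b)⁻¹).trace ≤ C.trace / (n * lam) := by
    intro C hC a b ha hb
    constructor
    · exact mul_nonneg (by positivity)
        (my_trace_mul_nonneg hC (hPD a b ha hb).inv.posSemidef)
    · have h := my_trace_inv_bound hlam hC (hPD a b ha hb) (hge a b ha hb)
      have hn' : (0:ℝ) < (n:ℝ) := by exact_mod_cast hn
      calc (1 / (n:ℝ)) * (C * (Amat a b)⁻¹).trace
          ≤ (1 / (n:ℝ)) * (C.trace / lam) := by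
            apply mul_le_mul_of_nonneg_left h (by positivity)
        _ = C.trace / (n * lam) := by field_simp
  set F : T → T := fun p =>
    (⟨(1 / (n:ℝ)) * (C₁ * (Amat p.1 p.2)⁻¹).trace,
      (hbound C₁ hC₁ p.1 p.2 p.1.2.1 p.2.2.1).1, (hbound C₁ hC₁ p.1 p.2 p.1.2.1 p.2.2.1).2⟩,
     ⟨(1 / (n:ℝ)) * (C₂ * (Amat p.1 p.2)⁻¹).trace,
      (hbound C₂ hC₂ p.1 p.2 p.1.2.1 p.2.2.1).1, (hbound C₂ hC₂ p.1 p.2 p.1.2.1 p.2.2.1).2⟩)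
    with hFdef
  have hmono : Monotone F := by
    intro p q hpq
    have h1 : (p.1 : ℝ) ≤ q.1 := hpq.1
    have h2 : (p.2 : ℝ) ≤ q.2 := hpq.2
    have hinv := my_inv_antitone (hPD q.1 q.2 q.1.2.1 q.2.2.1) (hPD p.1 p.2 p.1.2.1 p.2.2.1)
      (hanti p.1 p.2 q.1 q.2 p.1.2.1 p.2.2.1 h1 h2)
    have key : ∀ (C : Matrix (Fin d) (Fin d) ℝ), C.PosSemidef →
        (C * (Amat p.1 p.2)⁻¹).trace ≤ (C * (Amat q.1 q.2)⁻¹).trace := by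
      intro C hC
      have h0 := my_trace_mul_nonneg hC hinv
      rw [Matrix.mul_sub, Matrix.trace_sub] at h0
      linarith
    constructor
    · show (1 / (n:ℝ)) * (C₁ * (Amat p.1 p.2)⁻¹).trace
        ≤ (1 / (n:ℝ)) * (C₁ * (Amat q.1 q.2)⁻¹).trace
      exact mul_le_mul_of_nonneg_left (key C₁ hC₁) (by positivity)
    · show (1 / (n:ℝ)) * (C₂ * (Amat p.1 p.2)⁻¹).trace
        ≤ (1 / (n:ℝ)) * (C₂ * (Amat q.1 q.2)⁻¹).trace
      exact mul_le_mul_of_nonneg_left (key C₂ hC₂) (by positivity)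
  set f : T →o T := ⟨F, hmono⟩ with hfdef
  obtain ⟨x, hx⟩ : ∃ x : T, F x = x := ⟨f.lfp, f.map_lfp⟩
  refine ⟨x.1, x.2, ⟨x.1.2.1, x.1.2.2⟩, ⟨x.2.2.1, x.2.2.2⟩,
    hPD x.1 x.2 x.1.2.1 x.2.2.1, ?_, ?_⟩
  · have := congrArg (fun p : T => (p.1 : ℝ)) hx
    exact this.symm
  · have := congrArg (fun p : T => (p.2 : ℝ)) hx
    exact this.symm
end
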